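/- For finite sets A, B of real numbers, and for every real s let A_s = A ∩ (A + s). Then the number of representations of t as a difference of two elements of A_s equals the number of representations of s as a difference of two elements of A_t; both equal |A ∩ (A+s) ∩ (A+t) ∩ (A+s+t)|. -/

import Mathlib

open Finset Pointwise

/-- `A + s` as a finset: the shift of `A` by `s`. -/
noncomputable def shiftSet (A : Finset ℝ) (s : ℝ) : Finset ℝ := A.image (· + s)

/-- `A_s = A ∩ (A + s)`. -/
noncomputable def Asub (A : Finset ℝ) (s : ℝ) : Finset ℝ := A ∩ shiftSet A s

/-- `δ_{X,Y}(s)`: number of pairs `(x,y) ∈ X × Y` with `x - y = s`. -/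
noncomputable def dXY (X Y : Finset ℝ) (s : ℝ) : ℕ :=
  ((X ×ˢ Y).filter (fun p => p.1 - p.2 = s)).card

lemma mem_shiftSet {A : Finset ℝ} {s x : ℝ} : x ∈ shiftSet A s ↔ x - s ∈ A := by
  simp only [shiftSet, mem_image]
  constructor
  · rintro ⟨a, ha, rfl⟩; simpa using ha
  · intro h; exact ⟨x - s, h, by ring⟩

lemma key (A : Finset ℝ) (s t : ℝ) :
    dXY (Asub A s) (Asub A s) t =
      (A ∩ shiftSet A s ∩ shiftSet A t ∩ shiftSet A (s + t)).card := by
  unfold dXY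
  apply Finset.card_bij (fun p _ => p.1)
  · intro p hp
    simp only [mem_filter, mem_product, Asub, mem_inter, mem_shiftSet] at hp ⊢
    obtain ⟨⟨⟨h1, h2⟩, h3, h4⟩, h5⟩ := hp
    have e : p.2 = p.1 - t := by linarith
    refine ⟨⟨⟨h1, h2⟩, ?_⟩, ?_⟩
    · rw [← e]; exact h3
    · have : p.1 - (s + t) = p.2 - s := by rw [e]; ring
      rw [this]; exact h4
  · intro p hp q hq h
    simp only [mem_filter] at hp hq
    have : p.2 = q.2 := by
      have := hp.2; have := hq.2; nlinarith
    exact Prod.ext h this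
  · intro x hx
    simp only [Asub, mem_inter, mem_shiftSet] at hx
    obtain ⟨⟨⟨h1, h2⟩, h3⟩, h4⟩ := hx
    refine ⟨(x, x - t), ?_, rfl⟩
    simp only [mem_filter, mem_product, Asub, mem_inter, mem_shiftSet]
    refine ⟨⟨⟨h1, h2⟩, h3, ?_⟩, by ring⟩
    have : x - t - s = x - (s + t) := by ring
    rw [this]; exact h4

theorem stmt0 (A B : Finset ℝ) (s t : ℝ) :
    dXY (Asub A s) (Asub A s) t = dXY (Asub A t) (Asub A t) s ∧
    dXY (Asub A s) (Asub A s) t =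
      (A ∩ shiftSet A s ∩ shiftSet A t ∩ shiftSet A (s + t)).card := by
  refine ⟨?_, key A s t⟩
  rw [key A s t, key A t s, add_comm t s]
  congr 1
  ext x
  simp only [mem_inter]
  tauto
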